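/- Let λ₁,…,λ_K > 0 with geometric mean g = (∏ᵢ λᵢ)^{1/K}. Define the exact per-user MMSE ε²(γ) = (1/K)∑ᵢ 1/(1+γλᵢ) and the approximation ε̂²(γ) = 1/(1+γg). Then there exists γ* > 0 at which ε²(γ*) = ε̂²(γ*), provided the λᵢ are not all equal (otherwise they coincide everywhere). -/

import Mathlib

open Finset

lemma amgm_strict_aux (K : ℕ) (hK : 0 < K) (lam : Fin K → ℝ) (hlam : ∀ i, 0 < lam i)
    (hne : ¬ ∀ i j, lam i = lam j) :
    (K : ℝ) * Real.exp ((∑ i, Real.log (lam i)) / K) < ∑ i, lam i := by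
  push_neg at hne
  obtain ⟨j, k, hjk⟩ := hne
  have hK' : (0:ℝ) < K := Nat.cast_pos.mpr hK
  have h := strictConvexOn_exp.map_sum_lt (t := (univ : Finset (Fin K)))
    (w := fun _ => (1:ℝ)/K) (p := fun i => Real.log (lam i))
    (fun i _ => one_div_pos.mpr hK')
    (by simp [Finset.sum_const, Finset.card_univ]; field_simp)
    (fun i _ => Set.mem_univ _)
    ⟨j, mem_univ j, k, mem_univ k, fun h => hjk (by
      have := congrArg Real.exp h
      simpa [Real.exp_log (hlam j), Real.exp_log (hlam k)] using this)⟩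
  simp only [smul_eq_mul, Real.exp_log (hlam _)] at h
  rw [← Finset.mul_sum, ← Finset.mul_sum] at h
  have h2 := (mul_lt_mul_iff_right₀ hK').mpr h
  have e1 : (1:ℝ)/K * ∑ i, Real.log (lam i) = (∑ i, Real.log (lam i)) / K := by ring
  have e2 : (K:ℝ) * (1/K * ∑ i, lam i) = ∑ i, lam i := by field_simp
  rw [e1, e2] at h2
  exact h2

theorem mmse_approximation_crossing_point
    (K : ℕ) (hK : 0 < K) (lam : Fin K → ℝ) (hlam : ∀ i, 0 < lam i)
    (hne : ¬ ∀ i j, lam i = lam j) :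
    let g : ℝ := (∏ i, lam i) ^ ((1 : ℝ) / K)
    ∃ γ : ℝ, 0 < γ ∧
      (1 / K : ℝ) * ∑ i, 1 / (1 + γ * lam i) = 1 / (1 + γ * g) := by
  intro g
  have hK' : (0:ℝ) < K := Nat.cast_pos.mpr hK
  have hprod : (0:ℝ) < ∏ i, lam i := Finset.prod_pos (fun i _ => hlam i)
  have hg : g = Real.exp ((∑ i, Real.log (lam i)) / K) := by
    rw [show g = (∏ i, lam i) ^ ((1 : ℝ) / K) from rfl,
      Real.rpow_def_of_pos hprod, Real.log_prod (fun i _ => (hlam i).ne')]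
    ring_nf
  have hgpos : 0 < g := hg ▸ Real.exp_pos _
  -- strict AM-GM
  have hsum : (K:ℝ) * g < ∑ i, lam i := hg ▸ amgm_strict_aux K hK lam hlam hne
  -- strict AM-GM for inverses
  have hinv : (K:ℝ) * g⁻¹ < ∑ i, (lam i)⁻¹ := by
    have h2 := amgm_strict_aux K hK (fun i => (lam i)⁻¹)
      (fun i => by simpa using inv_pos.mpr (hlam i))
      (by push_neg at hne ⊢; obtain ⟨j, k, hjk⟩ := hne;
          exact ⟨j, k, fun h => hjk (inv_injective h)⟩)
    have e0 : ∑ i, Real.log ((fun i => (lam i)⁻¹) i) = -∑ i, Real.log (lam i) := by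
      simp [Real.log_inv]
    rw [e0, show (-∑ i, Real.log (lam i)) / K = -((∑ i, Real.log (lam i))/K) by ring,
      Real.exp_neg, ← hg] at h2
    simpa using h2
  -- the factored function and its rescaled-at-infinity version
  set F : ℝ → ℝ := fun γ => ∑ i, (g - lam i) / ((1 + γ * lam i) * (1 + γ * g)) with hF
  set H : ℝ → ℝ := fun t => ∑ i, (g - lam i) / ((t + lam i) * (t + g)) with hHdef
  have hF0 : F 0 < 0 := by
    have : F 0 = (K:ℝ) * g - ∑ i, lam i := by
      simp [hF, Finset.sum_sub_distrib, Finset.sum_const, Finset.card_univ, mul_comm]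
    rw [this]; linarith
  have hH0 : 0 < H 0 := by
    have e : H 0 = ∑ i, (lam i)⁻¹ - (K:ℝ) * g⁻¹ := by
      simp only [hHdef, zero_add]
      have t1 : ∀ i : Fin K, (g - lam i)/(lam i * g) = (lam i)⁻¹ - g⁻¹ := by
        intro i
        have h1 := (hlam i).ne'
        have h2 := hgpos.ne'
        field_simp
      rw [Finset.sum_congr rfl (fun i _ => t1 i), Finset.sum_sub_distrib]
      simp [Finset.sum_const, Finset.card_univ, mul_comm]
    rw [e]; linarith
  -- continuity of H at 0, find t₀ > 0 with H t₀ > 0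
  have hHcont : ContinuousAt H 0 := by
    simp only [hHdef]
    apply tendsto_finset_sum
    intro i _
    exact ContinuousAt.div (by fun_prop) (by fun_prop)
      (by have := hlam i; positivity)
  have hev : ∀ᶠ t in nhdsWithin (0:ℝ) (Set.Ioi 0), 0 < H t ∧ 0 < t := by
    apply Filter.Eventually.and
    · exact (hHcont.eventually (eventually_gt_nhds hH0)).filter_mono nhdsWithin_le_nhds
    · exact eventually_mem_nhdsWithin
  obtain ⟨t₀, hHt₀, ht₀⟩ := hev.exists
  -- F (t₀⁻¹) > 0
  set γ₀ : ℝ := t₀⁻¹ with hγ₀def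
  have hγ₀ : 0 < γ₀ := inv_pos.mpr ht₀
  have hFγ₀ : 0 < F γ₀ := by
    have e : F γ₀ = t₀^2 * H t₀ := by
      simp only [hF, hHdef, Finset.mul_sum]
      refine Finset.sum_congr rfl (fun i _ => ?_)
      have h1 : t₀ + lam i ≠ 0 := by have := hlam i; positivity
      have h2 : t₀ + g ≠ 0 := by positivity
      have h3 : (1 + γ₀ * lam i) * (1 + γ₀ * g) = (t₀ + lam i) * (t₀ + g) / t₀^2 := by
        rw [hγ₀def]; field_simp
      rw [h3, div_div_eq_mul_div]
      ring
    rw [e]; positivity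
  -- IVT
  have hFcont : ContinuousOn F (Set.Icc 0 γ₀) := by
    simp only [hF]
    apply continuousOn_finset_sum
    intro i _
    apply ContinuousOn.div (by fun_prop) (by fun_prop)
    intro x hx
    have hx0 := hx.1
    have := hlam i
    positivity
  have h0mem : (0:ℝ) ∈ Set.Ioo (F 0) (F γ₀) := ⟨hF0, hFγ₀⟩
  obtain ⟨γ, hγmem, hFγ⟩ := intermediate_value_Ioo hγ₀.le hFcont h0mem
  refine ⟨γ, hγmem.1, ?_⟩
  -- convert F γ = 0 to the claimed identity
  have hd1 : ∀ i : Fin K, (0:ℝ) < 1 + γ * lam i := fun i => by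
    have := hlam i; have := hγmem.1; positivity
  have hd2 : (0:ℝ) < 1 + γ * g := by have := hγmem.1; positivity
  have key : ∑ i, (1 / (1 + γ * lam i) - 1 / (1 + γ * g)) = γ * F γ := by
    rw [hF, Finset.mul_sum]
    refine Finset.sum_congr rfl (fun i _ => ?_)
    have h1 := (hd1 i).ne'
    have h2 := hd2.ne'
    field_simp
    ring
  rw [hFγ, mul_zero, Finset.sum_sub_distrib] at key
  have key2 : ∑ i, 1 / (1 + γ * lam i) = (K:ℝ) * (1 / (1 + γ * g)) := by
    have : ∑ _i : Fin K, 1 / (1 + γ * g) = (K:ℝ) * (1 / (1 + γ * g)) := by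
      simp [Finset.sum_const, Finset.card_univ]
    linarith [key, this]
  rw [key2]
  field_simp
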